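/- Let q̂(s) = s⁻⁴ and L[q] := −(1/12)( q'' + (1/s + 3s/(R(1+s²/(2R)))) q' − q/s² ) for R > 0. Then there exist c > 0 and s₀ ≥ 1 such that L[q̂](s) ≥ c/s⁶ for all s ≥ s₀. -/

import Mathlib

/-- The radial (Fourier mode 1) lubrication operator with weight (1+s²/(2R))³. -/
noncomputable def Lop (R : ℝ) (q : ℝ → ℝ) (s : ℝ) : ℝ :=
  -(1 / 12) * (deriv (deriv q) s
    + (1 / s + 3 * s / (R * (1 + s ^ 2 / (2 * R)))) * deriv q s
    - q s / s ^ 2)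

lemma hasDerivAt_inv_pow4 {t : ℝ} (ht : t ≠ 0) :
    HasDerivAt (fun t : ℝ => 1 / t ^ 4) (-4 / t ^ 5) t := by
  have h := hasDerivAt_zpow (-4) t (Or.inl ht)
  have heq : (fun t : ℝ => 1 / t ^ 4) = fun t : ℝ => t ^ (-4 : ℤ) := by
    funext x
    rw [zpow_neg, one_div]
    norm_cast
  rw [heq]
  refine h.congr_deriv ?_
  have : t ^ ((-4 : ℤ) - 1) = 1 / t ^ 5 := by
    rw [show (-4 : ℤ) - 1 = -5 by norm_num, zpow_neg, one_div]
    norm_cast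
  rw [this]
  push_cast
  ring

lemma deriv_inv_pow4 {t : ℝ} (ht : t ≠ 0) :
    deriv (fun t : ℝ => 1 / t ^ 4) t = -4 / t ^ 5 :=
  (hasDerivAt_inv_pow4 ht).deriv

lemma hasDerivAt_neg4_inv_pow5 {t : ℝ} (ht : t ≠ 0) :
    HasDerivAt (fun t : ℝ => -4 / t ^ 5) (20 / t ^ 6) t := by
  have h := hasDerivAt_zpow (-5) t (Or.inl ht)
  have h2 := h.const_mul (-4 : ℝ)
  have heq : (fun t : ℝ => -4 / t ^ 5) = fun t : ℝ => (-4 : ℝ) * t ^ (-5 : ℤ) := by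
    funext x
    rw [zpow_neg, div_eq_mul_inv]
    norm_cast
  rw [heq]
  refine h2.congr_deriv ?_
  have : t ^ ((-5 : ℤ) - 1) = 1 / t ^ 6 := by
    rw [show (-5 : ℤ) - 1 = -6 by norm_num, zpow_neg, one_div]
    norm_cast
  rw [this]
  push_cast
  ring

lemma deriv2_inv_pow4 {s : ℝ} (hs : 0 < s) :
    deriv (deriv (fun t : ℝ => 1 / t ^ 4)) s = 20 / s ^ 6 := by
  have hev : deriv (fun t : ℝ => 1 / t ^ 4) =ᶠ[nhds s] fun t : ℝ => -4 / t ^ 5 := by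
    filter_upwards [eventually_gt_nhds hs] with t ht
    exact deriv_inv_pow4 (ne_of_gt ht)
  rw [hev.deriv_eq]
  exact (hasDerivAt_neg4_inv_pow5 (ne_of_gt hs)).deriv

/-- the barrier q̂(s) = s⁻⁴ satisfies L[q̂](s) ≥ c/s⁶ for s large. -/
theorem barrier_positivity (R : ℝ) (hR : 0 < R) :
    ∃ c > (0:ℝ), ∃ s₀ : ℝ, 1 ≤ s₀ ∧ ∀ s : ℝ, s₀ ≤ s →
      c / s ^ 6 ≤ Lop R (fun t => 1 / t ^ 4) s := by
  refine ⟨1/4, by norm_num, max 1 (Real.sqrt (6 * R)), le_max_left _ _, ?_⟩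
  intro s hs
  have hs1 : (1 : ℝ) ≤ s := le_trans (le_max_left _ _) hs
  have hs0 : 0 < s := lt_of_lt_of_le one_pos hs1
  have hsq : 6 * R ≤ s ^ 2 := by
    calc 6 * R = Real.sqrt (6 * R) ^ 2 := by
          rw [Real.sq_sqrt (by positivity)]
      _ ≤ s ^ 2 := by
          have h := le_trans (le_max_right 1 (Real.sqrt (6 * R))) hs
          exact pow_le_pow_left₀ (Real.sqrt_nonneg _) h 2
  unfold Lop
  rw [deriv2_inv_pow4 hs0, deriv_inv_pow4 (ne_of_gt hs0)]
  have hden : R * (1 + s ^ 2 / (2 * R)) = R + s ^ 2 / 2 := by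
    field_simp
  rw [hden]
  have hRs : 0 < R + s ^ 2 / 2 := by positivity
  rw [div_le_iff₀ (by positivity : (0:ℝ) < s ^ 6)] at *
  have key : 1 / 4 ≤ (-(1/12) * (20 / s ^ 6 + (1 / s + 3 * s / (R + s ^ 2 / 2)) * (-4 / s ^ 5)
      - (1 / s ^ 4) / s ^ 2)) * s ^ 6 := by
    have hs6 : (0:ℝ) < s ^ 6 := by positivity
    have expand : (-(1/12) * (20 / s ^ 6 + (1 / s + 3 * s / (R + s ^ 2 / 2)) * (-4 / s ^ 5)
        - (1 / s ^ 4) / s ^ 2)) * s ^ 6 = -(5/4) + s ^ 2 / (R + s ^ 2 / 2) := by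
      field_simp
      ring
    rw [expand]
    have h32 : (3/2 : ℝ) ≤ s ^ 2 / (R + s ^ 2 / 2) := by
      rw [le_div_iff₀ hRs]
      nlinarith
    linarith
  exact key
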